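/- arXiv:1804.02242 — 2 statements merged into one kernel-verified Lean document; each statement's English description precedes it below -/
import Mathlib

section
/- Let (T,L) be a TAP instance where T is a k-wide tree with root r and principal subtrees T₁,…,T_q having edge sets E₁,…,E_q. For each i ∈ [q], let L_i ⊆ L be a set of links covering E_i. Call a vertex u of T_i active if some cross-link in L_i has u as an endpoint, and suppose that for each active vertex u there is exactly one such cross-link ℓ_u ∈ L_i. Let M ⊆ L be a matching (a set of links whose endpoints are pairwise distinct) consisting of cross-links between active vertices, and for each i let L_i(M) = { ℓ_u : u ∈ V_i is an endpoint of some link of M }. Then the set B := ( ∪_{i=1}^{q} ( L_i \ L_i(M) ) ) ∪ M covers all edges of T, i.e., B is a solution to the TAP instance (T,L). -/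
open scoped Classical

/-- `a` lies on the unique path in the tree `G` between the endpoints of the link `ℓ`. -/
def MemLinkPath {V : Type} (G : SimpleGraph V) (ℓ : Sym2 V) (a : V) : Prop :=
  ∃ u v : V, ℓ = s(u, v) ∧ G.dist u a + G.dist a v = G.dist u v

/-- The edge set `P_ℓ` of the unique path in the tree `G` between the endpoints of `ℓ`. -/
def linkPath {V : Type} (G : SimpleGraph V) (ℓ : Sym2 V) : Set (Sym2 V) :=
  {e | e ∈ G.edgeSet ∧ ∀ a ∈ e, MemLinkPath G ℓ a}

/-- The link set `U` covers the edge set `F`. -/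
def Covers {V : Type} (G : SimpleGraph V) (U : Set (Sym2 V)) (F : Set (Sym2 V)) : Prop :=
  F ⊆ ⋃ ℓ ∈ U, linkPath G ℓ

/-- `v` belongs to the principal subtree of the tree `G` rooted at `r` associated with the
child `c` of `r`. -/
def MemPrincipal {V : Type} (G : SimpleGraph V) (r c v : V) : Prop :=
  v = r ∨ G.dist r c + G.dist c v = G.dist r v

/-- Vertex set of the principal subtree of child `c`. -/
noncomputable def principalVerts {V : Type} [Fintype V] (G : SimpleGraph V) (r c : V) :
    Finset V :=
  Finset.univ.filter (fun v => MemPrincipal G r c v)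

/-- The leaves (degree-1 vertices) of the principal subtree of child `c`. -/
noncomputable def principalLeaves {V : Type} [Fintype V] (G : SimpleGraph V) (r c : V) :
    Finset V :=
  (principalVerts G r c).filter
    (fun v => ((principalVerts G r c).filter (fun w => G.Adj v w)).card = 1)

/-- The tree `G` is `k`-wide with root `r`: every principal subtree has at most `k`
leaves. -/
def KWide {V : Type} [Fintype V] (G : SimpleGraph V) (r : V) (k : ℕ) : Prop :=
  ∀ c : V, G.Adj r c → (principalLeaves G r c).card ≤ k

/-- `u` and `v` lie in a common principal subtree of the tree `G` rooted at `r`. -/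
def SameSubtree {V : Type} (G : SimpleGraph V) (r u v : V) : Prop :=
  ∃ c : V, G.Adj r c ∧ MemPrincipal G r c u ∧ MemPrincipal G r c v

/-- `ℓ` is a cross-link with respect to the root `r`. -/
def IsCrossLink {V : Type} (G : SimpleGraph V) (r : V) (ℓ : Sym2 V) : Prop :=
  ∃ u v : V, ℓ = s(u, v) ∧ u ≠ r ∧ v ≠ r ∧ ¬ SameSubtree G r u v

/-- The edge set `E_c` of the principal subtree of child `c`. -/
def principalEdges {V : Type} (G : SimpleGraph V) (r c : V) : Set (Sym2 V) :=
  {e | e ∈ G.edgeSet ∧ ∀ a ∈ e, MemPrincipal G r c a}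

section Helpers

variable {V : Type} {G : SimpleGraph V}

open SimpleGraph

/-- In a tree, any path realizes the distance. -/
lemma tree_path_length (hT : G.IsTree) {u v : V} (p : G.Walk u v) (hp : p.IsPath) :
    p.length = G.dist u v := by
  obtain ⟨q, hq⟩ := hT.isConnected.exists_walk_length_eq_dist u v
  have hqp : q.IsPath := q.isPath_of_length_eq_dist hq
  have : (⟨p, hp⟩ : G.Path u v) = ⟨q, hqp⟩ := hT.IsAcyclic.path_unique _ _
  rw [show p = q from congrArg Subtype.val this, hq]

/-- Every vertex on a path starting at `r` with second vertex `c` is in the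
principal subtree of `c`. -/
lemma path_mem_principal (hT : G.IsTree) {r c t : V} (h : G.Adj r c) (q : G.Walk c t)
    (hq : (SimpleGraph.Walk.cons h q).IsPath) {w : V}
    (hw : w ∈ (SimpleGraph.Walk.cons h q).support) :
    MemPrincipal G r c w := by
  rw [SimpleGraph.Walk.support_cons, List.mem_cons] at hw
  rcases hw with rfl | hw
  · exact Or.inl rfl
  · right
    rw [SimpleGraph.Walk.cons_isPath_iff] at hq
    have h1 : (q.takeUntil w hw).IsPath := hq.1.takeUntil hw
    have h2 : r ∉ (q.takeUntil w hw).support := fun hr => hq.2 (q.support_takeUntil_subset hw hr)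
    have h3 : (SimpleGraph.Walk.cons h (q.takeUntil w hw)).IsPath := h1.cons h2
    have e1 := tree_path_length hT _ h1
    have e2 := tree_path_length hT _ h3
    rw [SimpleGraph.Walk.length_cons, e1] at e2
    have hrc : G.dist r c = 1 := SimpleGraph.dist_eq_one_iff_adj.mpr h
    omega

/-- Every nontrivial path from `r` lies in a single principal subtree. -/
lemma path_exists_principal (hT : G.IsTree) {r t : V} (p : G.Walk r t) (hp : p.IsPath)
    (hrt : r ≠ t) : ∃ c, G.Adj r c ∧ ∀ w ∈ p.support, MemPrincipal G r c w := by
  cases p with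
  | nil => exact absurd rfl hrt
  | cons h q => exact ⟨_, h, fun w hw => path_mem_principal hT h q hp hw⟩

/-- Every non-root vertex lies in some principal subtree. -/
lemma exists_principal (hT : G.IsTree) {r a : V} (ha : a ≠ r) :
    ∃ c, G.Adj r c ∧ MemPrincipal G r c a := by
  obtain ⟨p, hp⟩ := hT.isConnected.exists_walk_length_eq_dist r a
  obtain ⟨c, hc, hall⟩ := path_exists_principal hT p (p.isPath_of_length_eq_dist hp)
    (fun h => ha h.symm)
  exact ⟨c, hc, hall a p.end_mem_support⟩

/-- Uniqueness of the principal subtree containing a non-root vertex. -/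
lemma principal_unique (hT : G.IsTree) {r c c' a : V} (hc : G.Adj r c) (hc' : G.Adj r c')
    (ha : a ≠ r) (h1 : MemPrincipal G r c a) (h2 : MemPrincipal G r c' a) : c = c' := by
  have key : ∀ c₀ : V, ∀ hc₀ : G.Adj r c₀, MemPrincipal G r c₀ a →
      ∃ (q : G.Walk c₀ a) (hq : (SimpleGraph.Walk.cons hc₀ q).IsPath), True := by
    intro c₀ hc₀ hmem
    rcases hmem with rfl | hmem
    · exact absurd rfl ha
    obtain ⟨q, hq⟩ := hT.isConnected.exists_walk_length_eq_dist c₀ a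
    have hqp : q.IsPath := q.isPath_of_length_eq_dist hq
    have hrc₀ : G.dist r c₀ = 1 := SimpleGraph.dist_eq_one_iff_adj.mpr hc₀
    have hrq : r ∉ q.support := by
      intro hr
      have hsplit := q.take_spec hr
      have hlen : (q.takeUntil r hr).length + (q.dropUntil r hr).length = q.length := by
        conv_rhs => rw [← hsplit]
        rw [SimpleGraph.Walk.length_append]
      have d1 := SimpleGraph.dist_le (q.takeUntil r hr)
      have d2 := SimpleGraph.dist_le (q.dropUntil r hr)
      have hcr : G.dist c₀ r = 1 := by rw [SimpleGraph.dist_comm]; exact hrc₀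
      omega
    exact ⟨q, hqp.cons hrq, trivial⟩
  obtain ⟨q1, hq1, -⟩ := key c hc h1
  obtain ⟨q2, hq2, -⟩ := key c' hc' h2
  have heq : (⟨_, hq1⟩ : G.Path r a) = ⟨_, hq2⟩ := hT.IsAcyclic.path_unique _ _
  have heqw : SimpleGraph.Walk.cons hc q1 = SimpleGraph.Walk.cons hc' q2 :=
    congrArg Subtype.val heq
  have := congrArg (fun w => SimpleGraph.Walk.getVert w 1) heqw
  simpa [SimpleGraph.Walk.getVert_cons_succ] using this

/-- Both endpoints of an edge lie in a common principal subtree. -/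
lemma edge_common_principal (hT : G.IsTree) {r x y : V} (hxy : G.Adj x y) :
    ∃ c, G.Adj r c ∧ MemPrincipal G r c x ∧ MemPrincipal G r c y := by
  by_cases hx : x = r
  · subst hx
    exact ⟨y, hxy, Or.inl rfl, Or.inr (by rw [SimpleGraph.dist_self]; ring)⟩
  by_cases hy : y = r
  · subst hy
    exact ⟨x, hxy.symm, Or.inr (by rw [SimpleGraph.dist_self]; ring), Or.inl rfl⟩
  obtain ⟨p, hp⟩ := hT.isConnected.exists_walk_length_eq_dist r x
  have hpp : p.IsPath := p.isPath_of_length_eq_dist hp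
  by_cases hyp : y ∈ p.support
  · obtain ⟨c, hc, hall⟩ := path_exists_principal hT p hpp (fun h => hx h.symm)
    exact ⟨c, hc, hall x p.end_mem_support, hall y hyp⟩
  · set q : G.Walk r y := (SimpleGraph.Walk.cons hxy.symm p.reverse).reverse with hqdef
    have hq : q.IsPath := by
      apply SimpleGraph.Walk.IsPath.reverse
      rw [SimpleGraph.Walk.cons_isPath_iff]
      exact ⟨hpp.reverse, by simpa using hyp⟩
    obtain ⟨c, hc, hall⟩ := path_exists_principal hT q hq (fun h => hy h.symm)
    refine ⟨c, hc, hall x ?_, hall y (SimpleGraph.Walk.end_mem_support _)⟩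
    simp [hqdef]

/-- Every vertex on a walk avoiding `r` stays in the principal subtree of its start. -/
lemma walk_stays_principal (hT : G.IsTree) {r c : V} (hc : G.Adj r c) :
    ∀ {u t : V} (p : G.Walk u t), (∀ w ∈ p.support, w ≠ r) → MemPrincipal G r c u →
      ∀ w ∈ p.support, MemPrincipal G r c w := by
  intro u t p
  induction p with
  | nil =>
    intro _ hu w hw
    rw [SimpleGraph.Walk.support_nil, List.mem_singleton] at hw
    subst hw; exact hu
  | @cons u u' t h q ih =>
    intro havoid hu w hw
    have hur : u ≠ r := havoid u (SimpleGraph.Walk.start_mem_support _)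
    have hu'r : u' ≠ r := havoid u' (by simp [SimpleGraph.Walk.support_cons])
    have hu' : MemPrincipal G r c u' := by
      obtain ⟨c', hc', hx, hy⟩ := edge_common_principal hT (r := r) h
      have : c = c' := principal_unique hT hc hc' hur hu hx
      rwa [this]
    rw [SimpleGraph.Walk.support_cons, List.mem_cons] at hw
    rcases hw with rfl | hw
    · exact hu
    · exact ih (fun w hw => havoid w (by simp [SimpleGraph.Walk.support_cons, hw])) hu' w hw

/-- The path between vertices in different principal subtrees passes through the root. -/
lemma through_root (hT : G.IsTree) {r u v : V} (hu : u ≠ r) (hv : v ≠ r)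
    (hns : ¬ SameSubtree G r u v) : G.dist u r + G.dist r v = G.dist u v := by
  obtain ⟨p, hp⟩ := hT.isConnected.exists_walk_length_eq_dist u v
  have hpp : p.IsPath := p.isPath_of_length_eq_dist hp
  by_cases hrp : r ∈ p.support
  · have hsplit := p.take_spec hrp
    have hlen : (p.takeUntil r hrp).length + (p.dropUntil r hrp).length = p.length := by
      conv_rhs => rw [← hsplit]
      rw [SimpleGraph.Walk.length_append]
    have e1 := tree_path_length hT _ (hpp.takeUntil hrp)
    have e2 := tree_path_length hT _ (hpp.dropUntil hrp)
    omega
  · exfalso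
    obtain ⟨c, hc, hcu⟩ := exists_principal hT hu
    have := walk_stays_principal hT hc p
      (fun w hw heq => hrp (heq ▸ hw)) hcu v p.end_mem_support
    exact hns ⟨c, hc, hcu, this⟩

end Helpers

/-- In a `k`-wide TAP instance, given for each principal subtree (indexed by
the children `c` of the root `r`) a link set `Lc c ⊆ L` covering its edges such that each
active vertex is the endpoint of exactly one cross-link of its local solution, and given a
matching `M` of cross-links between active vertices, the rewired set
`B = (⋃_c (Lc c \ Lc c(M))) ∪ M` covers all edges of `T`. -/


theorem stmt_12 {V : Type} [Fintype V] [DecidableEq V]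
    (G : SimpleGraph V) [DecidableRel G.Adj] (hT : G.IsTree)
    (r : V) (k : ℕ) (hWide : KWide G r k)
    (L : Finset (Sym2 V)) (hLlinks : ∀ ℓ ∈ L, ¬ ℓ.IsDiag)
    (Lc : V → Finset (Sym2 V))
    (hLcSub : ∀ c : V, G.Adj r c → Lc c ⊆ L)
    (hCover : ∀ c : V, G.Adj r c → Covers G (↑(Lc c)) (principalEdges G r c))
    (hUnique : ∀ c : V, G.Adj r c → ∀ u : V, MemPrincipal G r c u →
      ∀ ℓ₁ ∈ Lc c, ∀ ℓ₂ ∈ Lc c, IsCrossLink G r ℓ₁ → IsCrossLink G r ℓ₂ →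
        u ∈ ℓ₁ → u ∈ ℓ₂ → ℓ₁ = ℓ₂)
    (M : Finset (Sym2 V)) (hML : M ⊆ L)
    (hMatching : ∀ m₁ ∈ M, ∀ m₂ ∈ M, m₁ ≠ m₂ → ∀ v : V, v ∈ m₁ → v ∉ m₂)
    (hMcross : ∀ m ∈ M, IsCrossLink G r m ∧
      ∀ v ∈ m, ∃ c : V, G.Adj r c ∧ MemPrincipal G r c v ∧
        ∃ ℓ ∈ Lc c, IsCrossLink G r ℓ ∧ v ∈ ℓ) :
    Covers G
      (↑(((G.neighborFinset r).biUnion fun c =>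
          Lc c \ ((Lc c).filter fun ℓ => IsCrossLink G r ℓ ∧
            ∃ u ∈ ℓ, MemPrincipal G r c u ∧ ∃ m ∈ M, u ∈ m)) ∪ M))
      G.edgeSet := by
  intro e he
  -- find the principal subtree containing the edge e
  induction e using Sym2.ind with
  | _ x y =>
  rw [SimpleGraph.mem_edgeSet] at he
  obtain ⟨c, hcadj, hcx, hcy⟩ := edge_common_principal hT (r := r) he
  have hePrin : s(x, y) ∈ principalEdges G r c := by
    refine ⟨(G.mem_edgeSet).mpr he, fun a ha => ?_⟩
    rcases Sym2.mem_iff.mp ha with rfl | rfl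
    · exact hcx
    · exact hcy
  have heCov := hCover c hcadj hePrin
  simp only [Set.mem_iUnion, Finset.mem_coe] at heCov
  obtain ⟨ℓ, hℓLc, hℓpath⟩ := heCov
  set filt := (Lc c).filter fun ℓ => IsCrossLink G r ℓ ∧
      ∃ u ∈ ℓ, MemPrincipal G r c u ∧ ∃ m ∈ M, u ∈ m with hfilt
  by_cases hrem : ℓ ∈ filt
  · -- ℓ was removed; use the matching link instead
    rw [hfilt, Finset.mem_filter] at hrem
    obtain ⟨-, hcross, u, huℓ, huPrin, m, hmM, hum⟩ := hrem
    have hur : u ≠ r := by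
      obtain ⟨u₁, v₁, hleq, h1, h2, -⟩ := hcross
      rw [hleq] at huℓ
      rcases Sym2.mem_iff.mp huℓ with rfl | rfl <;> assumption
    -- normalize the cross-link ℓ as s(u, v)
    obtain ⟨v, hℓeq, hvr, hnsuv⟩ :
        ∃ v, ℓ = s(u, v) ∧ v ≠ r ∧ ¬ SameSubtree G r u v := by
      obtain ⟨u₁, v₁, hleq, h1, h2, hns⟩ := hcross
      rw [hleq] at huℓ
      rcases Sym2.mem_iff.mp huℓ with rfl | rfl
      · exact ⟨v₁, hleq, h2, hns⟩
      · refine ⟨u₁, by rw [hleq, Sym2.eq_swap], h1, fun ⟨c₀, hc₀, h₀1, h₀2⟩ =>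
          hns ⟨c₀, hc₀, h₀2, h₀1⟩⟩
    have hvNotPrin : ¬ MemPrincipal G r c v := fun h => hnsuv ⟨c, hcadj, huPrin, h⟩
    -- normalize the matching link m as s(u, w)
    obtain ⟨w, hmeq, hwr, hnsuw⟩ :
        ∃ w, m = s(u, w) ∧ w ≠ r ∧ ¬ SameSubtree G r u w := by
      obtain ⟨u₂, w₂, hmeq, h1, h2, hns⟩ := (hMcross m hmM).1
      rw [hmeq] at hum
      rcases Sym2.mem_iff.mp hum with rfl | rfl
      · exact ⟨w₂, hmeq, h2, hns⟩
      · refine ⟨u₂, by rw [hmeq, Sym2.eq_swap], h1, fun ⟨c₀, hc₀, h₀1, h₀2⟩ =>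
          hns ⟨c₀, hc₀, h₀2, h₀1⟩⟩
    have hm_root : G.dist u r + G.dist r w = G.dist u w := through_root hT hur hwr hnsuw
    have hl_root : G.dist u r + G.dist r v = G.dist u v := through_root hT hur hvr hnsuv
    -- m covers the relevant edge
    have hmB : m ∈ ((G.neighborFinset r).biUnion fun c =>
        Lc c \ ((Lc c).filter fun ℓ => IsCrossLink G r ℓ ∧
          ∃ u ∈ ℓ, MemPrincipal G r c u ∧ ∃ m ∈ M, u ∈ m)) ∪ M :=
      Finset.mem_union_right _ hmM
    refine Set.mem_iUnion.mpr ⟨m, Set.mem_iUnion.mpr ⟨Finset.mem_coe.mpr hmB, ?_⟩⟩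
    refine ⟨(G.mem_edgeSet).mpr he, fun a ha => ?_⟩
    -- a is between u and v
    have hbet : G.dist u a + G.dist a v = G.dist u v := by
      obtain ⟨u', v', heq', hd'⟩ := hℓpath.2 a ha
      rw [hℓeq, Sym2.eq_iff] at heq'
      rcases heq' with ⟨rfl, rfl⟩ | ⟨rfl, rfl⟩
      · exact hd'
      · have c1 : G.dist u a = G.dist a u := SimpleGraph.dist_comm ..
        have c2 : G.dist a v = G.dist v a := SimpleGraph.dist_comm ..
        have c3 : G.dist u v = G.dist v u := SimpleGraph.dist_comm ..
        omega
    -- a is between u and r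
    have hsplit : G.dist u a + G.dist a r = G.dist u r := by
      by_cases har : a = r
      · subst har; rw [SimpleGraph.dist_self]; omega
      · have haPrin : MemPrincipal G r c a := hePrin.2 a ha
        have hnsav : ¬ SameSubtree G r a v := by
          rintro ⟨c₀, hc₀, h₀1, h₀2⟩
          exact hvNotPrin (principal_unique hT hc₀ hcadj har h₀1 haPrin ▸ h₀2)
        have := through_root hT har hvr hnsav
        omega
    -- conclude: a is between u and w
    refine ⟨u, w, hmeq, ?_⟩
    have t1 := hT.isConnected.dist_triangle (u := u) (v := a) (w := w)
    have t2 := hT.isConnected.dist_triangle (u := a) (v := r) (w := w)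
    omega
  · -- ℓ was kept
    have hℓB : ℓ ∈ ((G.neighborFinset r).biUnion fun c =>
        Lc c \ ((Lc c).filter fun ℓ => IsCrossLink G r ℓ ∧
          ∃ u ∈ ℓ, MemPrincipal G r c u ∧ ∃ m ∈ M, u ∈ m)) ∪ M := by
      refine Finset.mem_union_left _ (Finset.mem_biUnion.mpr
        ⟨c, (G.mem_neighborFinset r c).mpr hcadj, Finset.mem_sdiff.mpr ⟨hℓLc, hrem⟩⟩)
    exact Set.mem_iUnion.mpr ⟨ℓ, Set.mem_iUnion.mpr ⟨Finset.mem_coe.mpr hℓB, hℓpath⟩⟩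
end

section
/- Let (T,L) be a shadow-complete TAP instance where T is a k-wide tree with root r, let T_i be a principal subtree with edge set E_i, and let L' ⊆ L be a shadow-minimal set of links that covers E_i. Suppose ℓ ∈ L' is a cross-link with an endpoint v in T_i such that v has degree 2 in T. Then L' contains an up-link ℓ' having v as an endpoint and covering the edge between v and its child (in particular, v lies on the path in T from r to the other endpoint of ℓ'). -/
open scoped Classical

/-- `s` is a shadow of the link `ℓ`: both endpoints of `s` lie on the path `P_ℓ`. -/
def IsShadow {V : Type} (G : SimpleGraph V) (s ℓ : Sym2 V) : Prop :=
  ∀ a ∈ s, MemLinkPath G ℓ a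

/-- Links `ℓ₁`, `ℓ₂` are shadow-minimal: no (proper) shadow `s` of one of them, say `ℓ₁`,
satisfies `P_{ℓ₁} ∪ P_{ℓ₂} = P_s ∪ P_{ℓ₂}`. -/
def ShadowMinimalPair {V : Type} (G : SimpleGraph V) (ℓ₁ ℓ₂ : Sym2 V) : Prop :=
  ¬ ∃ s : Sym2 V, s ≠ ℓ₁ ∧ IsShadow G s ℓ₁ ∧
      linkPath G s ∪ linkPath G ℓ₂ = linkPath G ℓ₁ ∪ linkPath G ℓ₂

/-- A set of links is shadow-minimal if its links are pairwise shadow-minimal. -/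
def ShadowMinimalSet {V : Type} (G : SimpleGraph V) (L' : Finset (Sym2 V)) : Prop :=
  ∀ ℓ₁ ∈ L', ∀ ℓ₂ ∈ L', ℓ₁ ≠ ℓ₂ → ShadowMinimalPair G ℓ₁ ℓ₂

/-- `ℓ` is an in-link with respect to the root `r`: both endpoints lie in a common
principal subtree. -/
def IsInLink {V : Type} (G : SimpleGraph V) (r : V) (ℓ : Sym2 V) : Prop :=
  ∃ u v : V, ℓ = s(u, v) ∧ SameSubtree G r u v

/-- `ℓ` is an up-link with respect to the root `r`: an in-link `{u,v}` such that `u` lies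
on the path in `T` from `r` to `v`. -/
def IsUpLink {V : Type} (G : SimpleGraph V) (r : V) (ℓ : Sym2 V) : Prop :=
  IsInLink G r ℓ ∧ ∃ u v : V, ℓ = s(u, v) ∧ G.dist r u + G.dist u v = G.dist r v

open SimpleGraph Walk
section

/-- Betweenness in a graph metric. -/
def TB {V : Type} (G : SimpleGraph V) (u a v : V) : Prop :=
  G.dist u a + G.dist a v = G.dist u v

section Toolkit

variable {V : Type} {G : SimpleGraph V}

lemma dist_comm' (G : SimpleGraph V) (x y : V) : G.dist x y = G.dist y x :=
  SimpleGraph.dist_comm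

lemma tb_symm (h : TB G u a v) : TB G v a u := by
  unfold TB at *
  rw [dist_comm' G v a, dist_comm' G a u, dist_comm' G v u]; omega

lemma tb_left (u v : V) : TB G u u v := by unfold TB; simp [SimpleGraph.dist_self]

lemma tb_right (u v : V) : TB G u v v := by unfold TB; simp [SimpleGraph.dist_self]

/-- From `u — b — a` and `u — a — v` conclude `u — b — v` (pure metric fact). -/
lemma tb_trans1 (hc : G.Connected) (h1 : TB G u b a) (h2 : TB G u a v) : TB G u b v := by
  unfold TB at *
  have t1 := hc.dist_triangle (u := u) (v := b) (w := v)
  have t2 := hc.dist_triangle (u := b) (v := a) (w := v)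
  omega

/-- From `u — a — v` and `u — v — b` conclude `u — a — b` (pure metric fact). -/
lemma tb_trans2 (hc : G.Connected) (h1 : TB G u a v) (h2 : TB G u v b) : TB G u a b := by
  unfold TB at *
  have t1 := hc.dist_triangle (u := a) (v := v) (w := b)
  have t2 := hc.dist_triangle (u := u) (v := a) (w := b)
  omega

/-- From `u — a — v` and `a — b — v` conclude `u — b — v` (pure metric fact). -/
lemma tb_trans3 (hc : G.Connected) (h1 : TB G u a v) (h2 : TB G a b v) : TB G u b v := by
  unfold TB at *
  have t1 := hc.dist_triangle (u := u) (v := a) (w := b)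
  have t2 := hc.dist_triangle (u := u) (v := b) (w := v)
  omega

/-- In a tree, every path realizes the distance. -/
lemma path_length (hT : G.IsTree) {u v : V} {p : G.Walk u v} (hp : p.IsPath) :
    p.length = G.dist u v := by
  obtain ⟨q, hq, hql⟩ := hT.isConnected.exists_path_of_dist u v
  have h : (⟨p, hp⟩ : G.Path u v) = ⟨q, hq⟩ := hT.IsAcyclic.path_unique _ _
  have h2 : p = q := congrArg Subtype.val h
  rw [h2, hql]

lemma tb_of_mem_support (hT : G.IsTree) {u v a : V} {p : G.Walk u v} (hp : p.IsPath)
    (ha : a ∈ p.support) : TB G u a v := by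
  have h1 := path_length hT (hp.takeUntil ha)
  have h2 := path_length hT (hp.dropUntil ha)
  have h3 := congrArg Walk.length (p.take_spec ha)
  rw [Walk.length_append] at h3
  have h4 := path_length hT hp
  unfold TB; omega

lemma append_isPath {u a v : V} {p : G.Walk u a} {q : G.Walk a v}
    (hp : p.IsPath) (hq : q.IsPath) (h : ∀ z, z ∈ p.support → z ∈ q.support → z = a) :
    (p.append q).IsPath := by
  rw [Walk.isPath_def, Walk.support_append, List.nodup_append]
  refine ⟨hp.support_nodup, ?_, ?_⟩
  · have := hq.support_nodup
    rw [q.support_eq_cons] at this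
    exact this.of_cons
  · intro z hz y hz' hzy
    subst hzy
    have hzq : z ∈ q.support := by
      rw [q.support_eq_cons]; exact List.mem_cons_of_mem _ hz'
    have hza : z = a := h z hz hzq
    have := hq.support_nodup
    rw [q.support_eq_cons] at this
    exact (List.nodup_cons.mp this).1 (hza ▸ hz')

lemma mem_support_of_tb (hT : G.IsTree) {u v a : V} {p : G.Walk u v} (hp : p.IsPath)
    (h : TB G u a v) : a ∈ p.support := by
  have hc := hT.isConnected
  obtain ⟨q, hq, hql⟩ := hc.exists_path_of_dist u a
  obtain ⟨r, hr, hrl⟩ := hc.exists_path_of_dist a v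
  have hint : ∀ z, z ∈ q.support → z ∈ r.support → z = a := by
    intro z hzq hzr
    have h1 := tb_of_mem_support hT hq hzq
    have h2 := tb_of_mem_support hT hr hzr
    have t := hc.dist_triangle (u := u) (v := z) (w := v)
    have hz0 : G.dist z a = 0 := by unfold TB at h1 h2 h; omega
    exact ((hc.dist_eq_zero_iff).mp hz0).symm ▸ rfl
  have hqr : (q.append r).IsPath := append_isPath hq hr hint
  have heq : (⟨p, hp⟩ : G.Path u v) = ⟨q.append r, hqr⟩ := hT.IsAcyclic.path_unique _ _
  have h2 : p = q.append r := congrArg Subtype.val heq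
  rw [h2, Walk.mem_support_append_iff]
  left; exact q.end_mem_support

/-- Ordering of two points on a tree geodesic. -/
lemma tb_order (hT : G.IsTree) {u v a b : V} (ha : TB G u a v) (hb : TB G u b v)
    (hab : G.dist u a ≤ G.dist u b) : TB G u a b ∧ TB G a b v := by
  have hc := hT.isConnected
  obtain ⟨p, hp, hpl⟩ := hc.exists_path_of_dist u v
  have hamem := mem_support_of_tb hT hp ha
  have hbmem := mem_support_of_tb hT hp hb
  have hsplit : b ∈ (p.takeUntil a hamem).support ∨ b ∈ (p.dropUntil a hamem).support := by
    have := p.take_spec hamem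
    rw [← this, Walk.mem_support_append_iff] at hbmem
    exact hbmem
  rcases hsplit with hbt | hbd
  · have h1 := tb_of_mem_support hT (hp.takeUntil hamem) hbt
    have hba : b = a := by
      have h0 : G.dist b a = 0 := by unfold TB at h1; omega
      exact (hc.dist_eq_zero_iff).mp h0
    subst hba
    exact ⟨tb_right u b, by unfold TB at *; omega⟩
  · have h2 := tb_of_mem_support hT (hp.dropUntil hamem) hbd
    refine ⟨?_, h2⟩
    unfold TB at *
    have t1 := hc.dist_triangle (u := u) (v := a) (w := b)
    have t2 := hc.dist_triangle (u := u) (v := b) (w := v)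
    omega

/-- From `u — a — w` and `a — w — b` with `a ≠ w` conclude `u — a — b` (tree fact). -/
lemma tb_chain (hT : G.IsTree) {u a w b : V} (h1 : TB G u a w) (h2 : TB G a w b)
    (haw : a ≠ w) : TB G u a b := by
  have hc := hT.isConnected
  obtain ⟨p, hp, hpl⟩ := hc.exists_path_of_dist u a
  obtain ⟨q, hq, hql⟩ := hc.exists_path_of_dist a b
  have hint : ∀ z, z ∈ p.support → z ∈ q.support → z = a := by
    intro z hzp hzq
    have hza := tb_of_mem_support hT hp hzp
    have hzb := tb_of_mem_support hT hq hzq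
    have dc1 := dist_comm' G a z
    have dc2 := dist_comm' G z a
    have dc3 := dist_comm' G z w
    by_cases hcomp : G.dist a z ≤ G.dist a w
    · have := (tb_order hT hzb h2 hcomp).1
      have t := hc.dist_triangle (u := u) (v := z) (w := w)
      have h0 : G.dist a z = 0 := by unfold TB at *; omega
      rw [dist_comm' G a z] at h0
      exact ((hc.dist_eq_zero_iff).mp h0).symm ▸ rfl
    · push_neg at hcomp
      have := (tb_order hT h2 hzb hcomp.le).1
      have t := hc.dist_triangle (u := u) (v := z) (w := w)
      have h0 : G.dist a w = 0 := by unfold TB at *; omega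
      exact absurd ((hc.dist_eq_zero_iff).mp h0) haw
  have hpq : (p.append q).IsPath := append_isPath hp hq hint
  have := path_length hT hpq
  rw [Walk.length_append, hpl, hql] at this
  exact this

/-- First step of a tree geodesic. -/
lemma first_step (hT : G.IsTree) {u v : V} (huv : u ≠ v) :
    ∃ c', G.Adj u c' ∧ TB G u c' v := by
  have hc := hT.isConnected
  obtain ⟨p, hp, hpl⟩ := hc.exists_path_of_dist u v
  obtain ⟨c', hadj, p', rfl⟩ := Walk.exists_eq_cons_of_ne huv p
  have hp' : p'.IsPath := hp.of_cons
  have h1 := path_length hT hp'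
  have hd1 : G.dist u c' = 1 := SimpleGraph.dist_eq_one_iff_adj.mpr hadj
  rw [Walk.length_cons] at hpl
  refine ⟨c', hadj, ?_⟩
  unfold TB
  omega

/-- Median of three vertices in a tree. -/
lemma median (hT : G.IsTree) [Fintype V] [DecidableEq V] (u v w : V) :
    ∃ m, TB G u m v ∧ TB G u m w ∧ TB G v m w := by
  have hc := hT.isConnected
  obtain ⟨p, hp, hpl⟩ := hc.exists_path_of_dist u v
  obtain ⟨q, hq, hql⟩ := hc.exists_path_of_dist u w
  set S : Finset V := Finset.univ.filter (fun z => z ∈ p.support ∧ z ∈ q.support) with hS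
  have hSne : S.Nonempty := ⟨u, by simp [hS]⟩
  obtain ⟨m, hmS, hmax⟩ := S.exists_max_image (fun z => G.dist u z) hSne
  simp only [hS, Finset.mem_filter, Finset.mem_univ, true_and] at hmS
  obtain ⟨hmp, hmq⟩ := hmS
  have h1 := tb_of_mem_support hT hp hmp
  have h2 := tb_of_mem_support hT hq hmq
  refine ⟨m, h1, h2, ?_⟩
  have hpd : (p.dropUntil m hmp).IsPath := hp.dropUntil hmp
  have hqd : (q.dropUntil m hmq).IsPath := hq.dropUntil hmq
  have hint : ∀ z, z ∈ (p.dropUntil m hmp).reverse.support →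
      z ∈ (q.dropUntil m hmq).support → z = m := by
    intro z hzp hzq
    rw [Walk.support_reverse, List.mem_reverse] at hzp
    have hz1 := tb_of_mem_support hT hpd hzp
    have hz2 := tb_of_mem_support hT hqd hzq
    have hzS : z ∈ S := by
      simp only [hS, Finset.mem_filter, Finset.mem_univ, true_and]
      exact ⟨Walk.support_dropUntil_subset p hmp hzp, Walk.support_dropUntil_subset q hmq hzq⟩
    have hle := hmax z hzS
    have t := hc.dist_triangle (u := u) (v := z) (w := v)
    have h0 : G.dist m z = 0 := by unfold TB at *; omega
    exact ((hc.dist_eq_zero_iff).mp h0).symm ▸ rfl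
  have hap : ((p.dropUntil m hmp).reverse.append (q.dropUntil m hmq)).IsPath :=
    append_isPath hpd.reverse hqd hint
  have hlen := path_length hT hap
  rw [Walk.length_append, Walk.length_reverse, path_length hT hpd, path_length hT hqd] at hlen
  unfold TB
  rw [dist_comm' G v m]
  exact hlen

/-- A neighbor that is not towards `r` is away from `r` (tree fact). -/
lemma tb_of_adj_not_toward (hT : G.IsTree) {r v w : V} (hadj : G.Adj v w)
    (hnot : ¬ TB G r w v) : TB G r v w := by
  have hc := hT.isConnected
  obtain ⟨p, hp, hpl⟩ := hc.exists_path_of_dist r v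
  have hmem : w ∉ p.support := fun hmem => hnot (tb_of_mem_support hT hp hmem)
  have hcons : (Walk.cons hadj.symm p.reverse).IsPath := by
    rw [Walk.cons_isPath_iff]
    refine ⟨hp.reverse, ?_⟩
    rw [Walk.support_reverse, List.mem_reverse]
    exact hmem
  have := path_length hT hcons
  rw [Walk.length_cons, Walk.length_reverse, hpl] at this
  unfold TB
  rw [SimpleGraph.dist_eq_one_iff_adj.mpr hadj, dist_comm' G r w, ← this, Nat.add_comm]

lemma mem_link_tb {ℓ : Sym2 V} {a u v : V} (h : MemLinkPath G ℓ a) (heq : ℓ = s(u, v)) :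
    TB G u a v := by
  obtain ⟨u₁, v₁, h1, h2⟩ := h
  rw [heq] at h1
  rcases Sym2.eq_iff.mp h1 with ⟨rfl, rfl⟩ | ⟨rfl, rfl⟩
  · exact h2
  · exact tb_symm h2

end Toolkit

end

/-- Let `(T,L)` be a shadow-complete TAP instance on a `k`-wide tree with
root `r`, let `T_c` be a principal subtree, and let `L' ⊆ L` be shadow-minimal and cover
the edges of `T_c`. If `ℓ ∈ L'` is a cross-link with an endpoint `v` in `T_c` of degree 2
in `T`, then `L'` contains an up-link `ℓ' = {v, w'}` with `v` lying on the path from `r`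
to the other endpoint `w'`, covering the edge between `v` and its child. -/
theorem stmt_13 {V : Type} [Fintype V] [DecidableEq V]
    (G : SimpleGraph V) [DecidableRel G.Adj] (hT : G.IsTree)
    (r : V) (k : ℕ) (hWide : KWide G r k)
    (L : Finset (Sym2 V)) (hLlinks : ∀ ℓ ∈ L, ¬ ℓ.IsDiag)
    (hComplete : ∀ ℓ ∈ L, ∀ s : Sym2 V, ¬ s.IsDiag → IsShadow G s ℓ → s ∈ L)
    (c : V) (hc : G.Adj r c)
    (L' : Finset (Sym2 V)) (hL' : L' ⊆ L) (hMin : ShadowMinimalSet G L')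
    (hCover : Covers G (↑L') (principalEdges G r c))
    (ℓ : Sym2 V) (hℓ : ℓ ∈ L') (hCross : IsCrossLink G r ℓ)
    (v : V) (hv : v ∈ ℓ) (hvc : MemPrincipal G r c v) (hdeg : G.degree v = 2) :
    ∃ ℓ' ∈ L', IsUpLink G r ℓ' ∧
      (∃ w' : V, ℓ' = s(v, w') ∧ G.dist r v + G.dist v w' = G.dist r w') ∧
      ∀ w : V, G.Adj v w → G.dist r v + G.dist v w = G.dist r w →
        s(v, w) ∈ linkPath G ℓ' := by
  
  classical
  have hconn := hT.isConnected
  have dc := dist_comm' G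
  -- extract the cross-link as s(v, x)
  obtain ⟨u₀, x₀, hux, hu0r, hx0r, hns0⟩ := hCross
  obtain ⟨x, hlvx, hxr, hvr, hns⟩ :
      ∃ x, ℓ = s(v, x) ∧ x ≠ r ∧ v ≠ r ∧ ¬ SameSubtree G r v x := by
    rw [hux, Sym2.mem_iff] at hv
    rcases hv with rfl | rfl
    · exact ⟨x₀, hux, hx0r, hu0r, hns0⟩
    · refine ⟨u₀, by rw [hux, Sym2.eq_swap], hu0r, hx0r, fun hs => hns0 ?_⟩
      obtain ⟨c', h1, h2, h3⟩ := hs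
      exact ⟨c', h1, h3, h2⟩
  -- v ≠ x
  have hvx : v ≠ x := by
    rintro rfl
    obtain ⟨c', hadj, htb⟩ := first_step hT (Ne.symm hvr)
    exact hns ⟨c', hadj, Or.inr htb, Or.inr htb⟩
  -- the root lies between v and x
  have hbtw_vrx : TB G v r x := by
    by_contra hno
    obtain ⟨m, hm1, hm2, hm3⟩ := median hT r v x
    have hmr : m ≠ r := by rintro rfl; exact hno hm3
    obtain ⟨c', hadj, htb⟩ := first_step hT (Ne.symm hmr)
    exact hns ⟨c', hadj, Or.inr (tb_trans1 hconn htb hm1), Or.inr (tb_trans1 hconn htb hm2)⟩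
  -- parent of v
  obtain ⟨p, hvp_adj, htb_vpr⟩ := first_step hT hvr
  have hvp1 : G.dist v p = 1 := SimpleGraph.dist_eq_one_iff_adj.mpr hvp_adj
  have htb_rpv : TB G r p v := tb_symm htb_vpr
  -- the other neighbor w₀ of v
  have hdeg' : (G.neighborFinset v).card = 2 := hdeg
  obtain ⟨a₀, b₀, hab₀, hnf⟩ := Finset.card_eq_two.mp hdeg'
  have hpnf : p ∈ G.neighborFinset v := (SimpleGraph.mem_neighborFinset G v p).mpr hvp_adj
  obtain ⟨w₀, hw₀p, hw₀nf⟩ : ∃ w₀, w₀ ≠ p ∧ w₀ ∈ G.neighborFinset v := by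
    rw [hnf] at hpnf
    rcases Finset.mem_insert.mp hpnf with h | h
    · exact ⟨b₀, by rw [← h] at hab₀; exact fun hh => hab₀ hh.symm, by
        rw [hnf]; simp⟩
    · rw [Finset.mem_singleton] at h
      exact ⟨a₀, by rw [← h] at hab₀; exact hab₀, by rw [hnf]; simp⟩
  have hvw_adj : G.Adj v w₀ := (SimpleGraph.mem_neighborFinset G v w₀).mp hw₀nf
  have hvw1 : G.dist v w₀ = 1 := SimpleGraph.dist_eq_one_iff_adj.mpr hvw_adj
  have hnb : ∀ z, G.Adj v z → z = p ∨ z = w₀ := by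
    intro z hz
    have hznf : z ∈ G.neighborFinset v := (SimpleGraph.mem_neighborFinset G v z).mpr hz
    rw [hnf, Finset.mem_insert, Finset.mem_singleton] at hznf hpnf hw₀nf
    rcases hznf with rfl | rfl <;> rcases hpnf with h1 | h1 <;>
      rcases hw₀nf with h2 | h2 <;> simp_all
  -- w₀ is a child of v
  have htb_rvw : TB G r v w₀ := by
    apply tb_of_adj_not_toward hT hvw_adj
    intro hbad
    have c1 := dc w₀ v
    have c2 := dc p v
    have hord := (tb_order hT hbad htb_rpv (by unfold TB at *; omega)).1
    have h0 : G.dist w₀ p = 0 := by unfold TB at *; omega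
    exact hw₀p (hconn.dist_eq_zero_iff.mp h0)
  -- w₀ is not on the path from v to x
  have hw₀x : ¬ TB G v w₀ x := by
    intro hbad
    have hposd : 0 < G.dist v r := hconn.pos_dist_of_ne hvr
    have hord := (tb_order hT hbad hbtw_vrx (by omega)).1
    have c1 := dc w₀ r
    have c2 := dc v r
    unfold TB at *
    omega
  -- the edge from v to its child lies in the principal subtree
  have hrcv : G.dist r c + G.dist c v = G.dist r v := by
    rcases hvc with h | h
    · exact absurd h hvr
    · exact h
  have he₀ : s(v, w₀) ∈ principalEdges G r c := by
    refine ⟨(SimpleGraph.mem_edgeSet G).mpr hvw_adj, ?_⟩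
    intro z hz
    rcases Sym2.mem_iff.mp hz with rfl | rfl
    · exact hvc
    · exact Or.inr (tb_trans2 hconn hrcv htb_rvw)
  -- a link of L' covering this edge
  have hcov := hCover he₀
  simp only [Set.mem_iUnion] at hcov
  obtain ⟨ℓ'', hmem', hlp⟩ := hcov
  have hℓ''L : ℓ'' ∈ L' := hmem'
  obtain ⟨a, b, hab_eq, -⟩ := hlp.2 v (Sym2.mem_mk_left v w₀)
  have htb_avb : TB G a v b := mem_link_tb (hlp.2 v (Sym2.mem_mk_left v w₀)) hab_eq
  have htb_awb : TB G a w₀ b := mem_link_tb (hlp.2 w₀ (Sym2.mem_mk_right v w₀)) hab_eq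
  -- TB v p x
  have htb_vpx : TB G v p x := tb_trans1 hconn htb_vpr hbtw_vrx
  -- v must be an endpoint of ℓ''
  have hva : v = a ∨ v = b := by
    by_contra hcon
    push_neg at hcon
    obtain ⟨hvna, hvnb⟩ := hcon
    obtain ⟨P', hP', hPl⟩ := hconn.exists_path_of_dist a b
    have hvsup : v ∈ P'.support := mem_support_of_tb hT hP' htb_avb
    have hQ : (P'.takeUntil v hvsup).IsPath := hP'.takeUntil hvsup
    obtain ⟨p₁, h₁, R, hQrev⟩ :=
      Walk.exists_eq_cons_of_ne hvna (P'.takeUntil v hvsup).reverse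
    have hp₁Q : p₁ ∈ (P'.takeUntil v hvsup).support := by
      have hmem : p₁ ∈ (P'.takeUntil v hvsup).reverse.support := by
        rw [hQrev, Walk.support_cons]
        exact List.mem_cons_of_mem _ R.start_mem_support
      rwa [Walk.support_reverse, List.mem_reverse] at hmem
    have htb_ap₁v : TB G a p₁ v := tb_of_mem_support hT hQ hp₁Q
    have hD : (P'.dropUntil v hvsup).IsPath := hP'.dropUntil hvsup
    obtain ⟨s₁, h₂, D', hDeq⟩ := Walk.exists_eq_cons_of_ne hvnb (P'.dropUntil v hvsup)
    have hs₁D : s₁ ∈ (P'.dropUntil v hvsup).support := by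
      rw [hDeq, Walk.support_cons]
      exact List.mem_cons_of_mem _ D'.start_mem_support
    have htb_vs₁b : TB G v s₁ b := tb_of_mem_support hT hD hs₁D
    have hp₁1 : G.dist v p₁ = 1 := SimpleGraph.dist_eq_one_iff_adj.mpr h₁
    have hs₁1 : G.dist v s₁ = 1 := SimpleGraph.dist_eq_one_iff_adj.mpr h₂
    have hp₁s₁ : p₁ ≠ s₁ := by
      intro heq
      subst heq
      have t := hconn.dist_triangle (u := a) (v := p₁) (w := b)
      have c1 := dc p₁ v
      unfold TB at *
      omega
    have hpP' : p ∈ P'.support := by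
      rcases hnb p₁ h₁ with h | h
      · exact Walk.support_takeUntil_subset P' hvsup (h ▸ hp₁Q)
      · rcases hnb s₁ h₂ with h' | h'
        · exact Walk.support_dropUntil_subset P' hvsup (h' ▸ hs₁D)
        · exact absurd (h.trans h'.symm) hp₁s₁
    have htb_apb : TB G a p b := tb_of_mem_support hT hP' hpP'
    have hne : ℓ ≠ ℓ'' := by
      intro h
      rw [hlvx, hab_eq] at h
      rcases Sym2.eq_iff.mp h with ⟨h1, -⟩ | ⟨h1, -⟩
      · exact hvna h1
      · exact hvnb h1
    apply hMin ℓ hℓ ℓ'' hℓ''L hne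
    refine ⟨s(p, x), ?_, ?_, ?_⟩
    · rw [hlvx]
      intro h
      rcases Sym2.eq_iff.mp h with ⟨h1, -⟩ | ⟨-, h2⟩
      · exact hvp_adj.ne' h1
      · exact hvx h2.symm
    · intro z hz
      rcases Sym2.mem_iff.mp hz with h | h
      · exact ⟨v, x, hlvx, by rw [h]; exact htb_vpx⟩
      · exact ⟨v, x, hlvx, by rw [h]; exact tb_right v x⟩
    · refine Set.Subset.antisymm ?_ ?_
      · rintro e (he | he)
        · exact Or.inl ⟨he.1, fun z hz =>
            ⟨v, x, hlvx, tb_trans3 hconn htb_vpx (mem_link_tb (he.2 z hz) rfl)⟩⟩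
        · exact Or.inr he
      · rintro e (he | he)
        · revert he
          refine Sym2.inductionOn e ?_
          intro z₁ z₂ he
          have h1 : TB G v z₁ x := mem_link_tb (he.2 z₁ (Sym2.mem_mk_left _ _)) hlvx
          have h2 : TB G v z₂ x := mem_link_tb (he.2 z₂ (Sym2.mem_mk_right _ _)) hlvx
          have hadj : G.Adj z₁ z₂ := (SimpleGraph.mem_edgeSet G).mp he.1
          have hclaim : ∀ z, G.Adj v z → TB G v z x → z = p := by
            intro z hzadj hzbtw
            rcases hnb z hzadj with h | h
            · exact h
            · exact absurd (h ▸ hzbtw) hw₀x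
          by_cases hz₁v : z₁ = v
          · subst hz₁v
            have hz₂p : z₂ = p := hclaim z₂ hadj h2
            subst hz₂p
            refine Or.inr ⟨he.1, fun z hz => ?_⟩
            rcases Sym2.mem_iff.mp hz with rfl | rfl
            · exact ⟨a, b, hab_eq, htb_avb⟩
            · exact ⟨a, b, hab_eq, htb_apb⟩
          by_cases hz₂v : z₂ = v
          · subst hz₂v
            have hz₁p : z₁ = p := hclaim z₁ hadj.symm h1
            subst hz₁p
            refine Or.inr ⟨he.1, fun z hz => ?_⟩
            rcases Sym2.mem_iff.mp hz with rfl | rfl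
            · exact ⟨a, b, hab_eq, htb_apb⟩
            · exact ⟨a, b, hab_eq, htb_avb⟩
          · have key : ∀ z', z' ≠ v → TB G v z' x → TB G p z' x := by
              intro z' hz'v hz'btw
              have hposd : 0 < G.dist v z' := hconn.pos_dist_of_ne (Ne.symm hz'v)
              exact (tb_order hT htb_vpx hz'btw (by omega)).2
            refine Or.inl ⟨he.1, fun z hz => ?_⟩
            rcases Sym2.mem_iff.mp hz with h | h
            · exact ⟨p, x, rfl, by rw [h]; exact key z₁ hz₁v h1⟩
            · exact ⟨p, x, rfl, by rw [h]; exact key z₂ hz₂v h2⟩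
        · exact Or.inr he
  -- normalize ℓ'' = s(v, b')
  obtain ⟨b', hℓ''eq, htb_vwb'⟩ : ∃ b', ℓ'' = s(v, b') ∧ TB G v w₀ b' := by
    rcases hva with rfl | rfl
    · exact ⟨b, hab_eq, htb_awb⟩
    · exact ⟨a, by rw [hab_eq, Sym2.eq_swap], tb_symm htb_awb⟩
  have htb_rvb' : TB G r v b' := tb_chain hT htb_rvw htb_vwb' hvw_adj.ne
  refine ⟨ℓ'', hℓ''L,
    ⟨⟨v, b', hℓ''eq, c, hc, hvc, Or.inr (tb_trans2 hconn hrcv htb_rvb')⟩,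
      v, b', hℓ''eq, htb_rvb'⟩,
    ⟨b', hℓ''eq, htb_rvb'⟩, ?_⟩
  intro w hw hbw
  rcases hnb w hw with h | h
  · exfalso
    rw [h] at hbw
    have c1 := dc v p
    unfold TB at *
    omega
  · rw [h]
    refine ⟨(SimpleGraph.mem_edgeSet G).mpr hvw_adj, fun z hz => ?_⟩
    rcases Sym2.mem_iff.mp hz with h' | h'
    · exact ⟨v, b', hℓ''eq, by rw [h']; exact tb_left v b'⟩
    · exact ⟨v, b', hℓ''eq, by rw [h']; exact htb_vwb'⟩
end
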